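/- Every σ-pseudocompact Tychonoff space is projectively Hurewicz. -/

import Mathlib

open Set Filter Topology

/-- A family is a γ-cover: it is infinite and every point belongs to all but
finitely many members. -/
def IsGammaCover {X : Type*} (𝒰 : Set (Set X)) : Prop :=
  𝒰.Infinite ∧ ∀ x : X, {V ∈ 𝒰 | x ∉ V}.Finite

/-- The Hurewicz property `U_fin(𝒪, Γ)`. -/
def Hurewicz (Y : Type*) [TopologicalSpace Y] : Prop :=
  ∀ 𝒰 : ℕ → Set (Set Y),
    (∀ n, (∀ V ∈ 𝒰 n, IsOpen V) ∧ ⋃₀ 𝒰 n = Set.univ) →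
    ∃ 𝒱 : ℕ → Set (Set Y), (∀ n, 𝒱 n ⊆ 𝒰 n ∧ (𝒱 n).Finite) ∧
      ∀ y : Y, ∀ᶠ n in Filter.atTop, y ∈ ⋃₀ 𝒱 n

/-- A space is projectively Hurewicz if every separable metrizable continuous
image of it is Hurewicz. -/
def ProjHurewicz (X : Type*) [TopologicalSpace X] : Prop :=
  ∀ (Y : Type) [TopologicalSpace Y],
    TopologicalSpace.MetrizableSpace Y → TopologicalSpace.SeparableSpace Y →
    ∀ f : X → Y, Continuous f → Function.Surjective f → Hurewicz Y

/-- A zero-set: the preimage of `{0}` of a continuous real-valued function. -/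
def IsZeroSet {X : Type*} [TopologicalSpace X] (F : Set X) : Prop :=
  ∃ f : X → ℝ, Continuous f ∧ F = f ⁻¹' {0}

/-- A cozero set: the complement of a zero-set. -/
def IsCozero {X : Type*} [TopologicalSpace X] (U : Set X) : Prop :=
  ∃ f : X → ℝ, Continuous f ∧ U = f ⁻¹' {0}ᶜ

/-- A (countable) cozero γ-cover which is γ_F-shrinkable: it admits a
γ-cover by zero-sets shrinking it. -/
def GammaFShrinkable {X : Type*} [TopologicalSpace X] (𝒰 : Set (Set X)) : Prop :=
  𝒰.Countable ∧ (∀ V ∈ 𝒰, IsCozero V) ∧ IsGammaCover 𝒰 ∧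
    ∃ F : Set X → Set X, (∀ V ∈ 𝒰, IsZeroSet (F V) ∧ F V ⊆ V) ∧
      (F '' 𝒰).Infinite ∧ ∀ x : X, {V ∈ 𝒰 | x ∉ F V}.Finite

/-- An ω-groupable open cover: an open cover admitting a partition into finite
parts such that every finite set is contained in a member of all but finitely
many parts. -/
def OmegaGroupable {X : Type*} [TopologicalSpace X] (𝒲 : Set (Set X)) : Prop :=
  (∀ V ∈ 𝒲, IsOpen V) ∧ ⋃₀ 𝒲 = Set.univ ∧
    ∃ P : ℕ → Set (Set X), (∀ n, (P n).Finite ∧ (P n).Nonempty) ∧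
      (⋃ n, P n) = 𝒲 ∧ (∀ m n, m ≠ n → Disjoint (P m) (P n)) ∧
      ∀ F : Set X, F.Finite → ∀ᶠ n in Filter.atTop, ∃ U ∈ P n, F ⊆ U

/-- `C_p(X)`: continuous real-valued functions with the topology of pointwise
convergence (subspace of the product `X → ℝ`). -/
abbrev Cp (X : Type*) [TopologicalSpace X] : Type _ :=
  {f : X → ℝ // Continuous f}

/-- The constant zero function in `C_p(X)`. -/
def zeroCp (X : Type*) [TopologicalSpace X] : Cp X :=
  ⟨fun _ => 0, continuous_const⟩

/-- `A ∈ Γ_g`: `A` is infinite, `g ∉ A` and `A` converges to `g`. -/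
def GammaAt {X : Type*} [TopologicalSpace X] (g : Cp X) (A : Set (Cp X)) : Prop :=
  A.Infinite ∧ g ∉ A ∧ ∀ W ∈ 𝓝 g, (A \ W).Finite

/-- `B ∈ wΓ_g`: `B` admits a partition into finite parts weakly converging
to `g`. -/
def WGammaAt {X : Type*} [TopologicalSpace X] (g : Cp X) (B : Set (Cp X)) : Prop :=
  ∃ S : ℕ → Set (Cp X), (∀ n, (S n).Finite ∧ (S n).Nonempty) ∧
    (⋃ n, S n) = B ∧ (∀ m n, m ≠ n → Disjoint (S m) (S n)) ∧
    ∀ W ∈ 𝓝 g, ∃ s : ℕ → Cp X, (∀ n, s n ∈ S n) ∧ ∀ᶠ n in Filter.atTop, s n ∈ W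

/-- The selection principle `S_fin(Γ_g, wΓ_g)` for `C_p(X)` at the point `g`. -/
def SfinGammaWGamma {X : Type*} [TopologicalSpace X] (g : Cp X) : Prop :=
  ∀ A : ℕ → Set (Cp X), (∀ n, GammaAt g (A n)) →
    ∃ B : ℕ → Set (Cp X), (∀ n, B n ⊆ A n ∧ (B n).Finite) ∧ WGammaAt g (⋃ n, B n)

/-- The selection principle `S_fin(Γ_F, Ω^gr)` for a space `X`. -/
def SfinGammaFOmegaGr (X : Type*) [TopologicalSpace X] : Prop :=
  ∀ 𝒰 : ℕ → Set (Set X), (∀ n, GammaFShrinkable (𝒰 n)) →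
    ∃ 𝒱 : ℕ → Set (Set X), (∀ n, 𝒱 n ⊆ 𝒰 n ∧ (𝒱 n).Finite) ∧
      OmegaGroupable (⋃ n, 𝒱 n)
/-- A subset is pseudocompact if every continuous real-valued function on it is bounded. -/
def PseudocompactSet {X : Type*} [TopologicalSpace X] (A : Set X) : Prop :=
  ∀ f : A → ℝ, Continuous f → ∃ M : ℝ, ∀ a : A, |f a| ≤ M

lemma pseudocompact_isCompact {Y : Type*} [MetricSpace Y] (S : Set Y)
    (h : ∀ g : S → ℝ, Continuous g → ∃ M : ℝ, ∀ a : S, |g a| ≤ M) :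
    IsCompact S := by
  apply IsSeqCompact.isCompact
  intro u hu
  by_contra hcon
  push_neg at hcon
  set v : ℕ → S := fun n => ⟨u n, hu n⟩ with hv
  have hnoclu : ∀ x : S, ¬ MapClusterPt x atTop v := by
    intro x hx
    obtain ⟨ψ, hψ, hconv⟩ := TopologicalSpace.FirstCountableTopology.tendsto_subseq hx
    have : Tendsto (u ∘ ψ) atTop (𝓝 (x : Y)) :=
      ((continuous_subtype_val.tendsto x).comp hconv)
    exact hcon x.1 x.2 ψ hψ this
  -- for each point, an open nbhd meeting the sequence finitely often
  have hU : ∀ x : S, ∃ U : Set S, IsOpen U ∧ x ∈ U ∧ {n | v n ∈ U}.Finite := by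
    intro x
    have := hnoclu x
    rw [mapClusterPt_iff_frequently] at this
    push_neg at this
    obtain ⟨s, hs, hfreq⟩ := this
    obtain ⟨N, hN⟩ := Filter.eventually_atTop.1 hfreq
    obtain ⟨U, hUs, hUo, hxU⟩ := mem_nhds_iff.1 hs
    refine ⟨U, hUo, hxU, (Set.finite_Iio N).subset ?_⟩
    intro n hn
    by_contra hge
    exact hN n (le_of_not_gt hge) (hUs hn)
  set T : Set S := Set.range v with hT
  have hfiber : ∀ y : S, {n | v n = y}.Finite := by
    intro y
    obtain ⟨U, hUo, hyU, hfin⟩ := hU y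
    exact hfin.subset fun n hn => by simp only [Set.mem_setOf_eq] at hn ⊢; rw [hn]; exact hyU
  have hTinf : T.Infinite := by
    intro hfin
    have : (Set.univ : Set ℕ).Finite := by
      have : (Set.univ : Set ℕ) ⊆ ⋃ y ∈ T, {n | v n = y} := by
        intro n _
        exact Set.mem_biUnion ⟨n, rfl⟩ rfl
      exact (hfin.biUnion fun y _ => hfiber y).subset this
    exact Set.infinite_univ this
  have hTclosed : IsClosed T := by
    rw [← isOpen_compl_iff, isOpen_iff_mem_nhds]
    intro x hx
    obtain ⟨U, hUo, hxU, hfin⟩ := hU x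
    have hximg : x ∉ v '' {n | v n ∈ U} := by
      rintro ⟨n, -, hn⟩; exact hx ⟨n, hn⟩
    have hmem : U \ v '' {n | v n ∈ U} ∈ 𝓝 x :=
      (hUo.sdiff (hfin.image v).isClosed).mem_nhds ⟨hxU, hximg⟩
    refine Filter.mem_of_superset hmem ?_
    rintro z ⟨hzU, hzimg⟩ ⟨n, rfl⟩
    exact hzimg ⟨n, hzU, rfl⟩
  have hdisc : ∀ t : T, IsOpen ({t} : Set T) := by
    intro t
    obtain ⟨U, hUo, htU, hfin⟩ := hU t.1
    set B := v '' {n | v n ∈ U} \ {(t : S)} with hB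
    have hBfin : B.Finite := (hfin.image v).diff
    have hU' : IsOpen (U \ B) := hUo.sdiff hBfin.isClosed
    have hkey : {t} = (Subtype.val ⁻¹' (U \ B) : Set T) := by
      ext s
      constructor
      · rintro rfl
        exact ⟨htU, fun hb => hb.2 rfl⟩
      · rintro ⟨hsU, hsB⟩
        obtain ⟨n, hn⟩ := s.2
        have himg : (s : ↑S) ∈ v '' {n | v n ∈ U} := ⟨n, by rw [Set.mem_setOf_eq, hn]; exact hsU, hn⟩
        have : (s : ↑S) = (t : ↑S) := by
          by_contra hne
          exact hsB ⟨himg, hne⟩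
        exact Subtype.ext this
    rw [hkey]
    exact hU'.preimage continuous_subtype_val
  haveI : DiscreteTopology T := discreteTopology_iff_isOpen_singleton.2 hdisc
  set e := Set.Infinite.natEmbedding T hTinf with he
  set g : T → ℝ := fun t => ((Function.invFun e t : ℕ) : ℝ) with hg
  have hge : ∀ k : ℕ, g (e k) = k := by
    intro k
    simp only [hg]
    rw [Function.leftInverse_invFun e.injective k]
  have hgc : Continuous g := continuous_of_discreteTopology
  obtain ⟨G, hG⟩ := ContinuousMap.exists_restrict_eq hTclosed ⟨g, hgc⟩
  obtain ⟨M, hM⟩ := h G G.continuous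
  set k := ⌈M⌉₊ + 1 with hk
  have h1 : G ((e k : T) : ↑S) = (k : ℝ) := by
    have h0 := ContinuousMap.congr_fun hG (e k)
    rw [ContinuousMap.restrict_apply] at h0
    rw [h0]
    exact hge k
  have h2 := hM ((e k : T) : ↑S)
  rw [h1, abs_of_nonneg (by positivity)] at h2
  have h3 : M ≤ (⌈M⌉₊ : ℝ) := Nat.le_ceil M
  have h4 : ((⌈M⌉₊ : ℕ) : ℝ) < (k : ℝ) := by
    rw [hk]; push_cast; linarith
  linarith

/-- Every σ-pseudocompact Tychonoff space is projectively Hurewicz. -/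
theorem sigma_pseudocompact_projHurewicz (X : Type*) [TopologicalSpace X] [T35Space X]
    (A : ℕ → Set X) (hpc : ∀ n, PseudocompactSet (A n)) (hcov : ⋃ n, A n = Set.univ) :
    ProjHurewicz X := by
  intro Y _ hmet hsep f hf hsurj
  letI : MetricSpace Y := TopologicalSpace.metrizableSpaceMetric Y
  have hK : ∀ n, IsCompact (f '' A n) := by
    intro n
    apply pseudocompact_isCompact
    intro g hg
    set r : A n → (f '' A n) := fun a => ⟨f a, ⟨a, a.2, rfl⟩⟩ with hr
    have hrc : Continuous r := Continuous.subtype_mk (hf.comp continuous_subtype_val) _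
    obtain ⟨M, hM⟩ := hpc n (g ∘ r) (hg.comp hrc)
    refine ⟨M, ?_⟩
    rintro ⟨y, a, ha, rfl⟩
    exact hM ⟨a, ha⟩
  intro 𝒰 h𝒰
  have hcomp : ∀ n, IsCompact (⋃ m ∈ Finset.range (n+1), f '' A m) := fun n =>
    (Finset.range (n+1)).finite_toSet.isCompact_biUnion (fun m _ => hK m)
  choose t ht using fun n => (hcomp n).elim_finite_subcover
    (fun i : (𝒰 n) => (i : Set Y)) (fun i => (h𝒰 n).1 i i.2)
    (by rw [← Set.sUnion_eq_iUnion, (h𝒰 n).2]; exact Set.subset_univ _)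
  refine ⟨fun n => Subtype.val '' (t n : Set (𝒰 n)), fun n => ⟨?_, ?_⟩, ?_⟩
  · rintro V ⟨i, _, rfl⟩; exact i.2
  · exact (t n).finite_toSet.image _
  · intro y
    obtain ⟨x, rfl⟩ := hsurj y
    have hx' : x ∈ ⋃ n, A n := hcov ▸ Set.mem_univ x
    obtain ⟨m, hm⟩ := Set.mem_iUnion.1 hx'
    refine Filter.eventually_atTop.2 ⟨m, fun n hn => ?_⟩
    have hx : f x ∈ ⋃ m' ∈ Finset.range (n+1), f '' A m' :=
      Set.mem_biUnion (Finset.mem_range.2 (Nat.lt_succ_of_le hn)) ⟨x, hm, rfl⟩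
    have := ht n hx
    rw [Set.mem_iUnion₂] at this
    obtain ⟨i, hi1, hi2⟩ := this
    exact ⟨i, ⟨i, hi1, rfl⟩, hi2⟩
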